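/- Let G be a connected graph (with a loop at every vertex), r ≡ 0 (mod 3), r ≥ 6, diam(G) ≥ r. Let X_1, ..., X_l (l ≥ 2) be the equivalence classes of insufficient vertices under d ≤ 2. Then for all i ≠ j, d(X_i, X_j) ≥ r+1, and at most one pair (i,j) satisfies d(X_i, X_j) = r+1. -/

import Mathlib

/-- The ball of radius `r` around `v` (the `r`-th neighbourhood `N^r(v)`). -/
def SimpleGraph.nbhdBall {V : Type*} (G : SimpleGraph V) (r : ℕ) (v : V) : Set V :=
  {u : V | G.dist v u ≤ r}

/-- A vertex is *sufficient* if `|N^r(v)| ≥ (r/3 + 1)·δ`, where `δ = G.minDegree + 1`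
is the minimum degree of the graph with a loop at every vertex. -/
def SimpleGraph.Sufficient {V : Type*} [Fintype V] (G : SimpleGraph V)
    [DecidableRel G.Adj] (r : ℕ) (v : V) : Prop :=
  (r / 3 + 1) * (G.minDegree + 1) ≤ (G.nbhdBall r v).ncard

namespace EdgeGrowthAux

open Finset

variable {V : Type*} [Fintype V] (G : SimpleGraph V) [DecidableRel G.Adj]

omit [Fintype V] in
lemma dist_adj {u v : V} (h : G.Adj u v) : G.dist u v = 1 :=
  SimpleGraph.dist_eq_one_iff_adj.mpr h

/-- Packing lemma: `n` centers pairwise at distance `≥ 3`, all within distance `< r`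
of `v`, force `|B_r(v)| ≥ n · (δ+1)`. -/
lemma pack (hG : G.Connected) (r : ℕ) (v : V) (n : ℕ) (c : ℕ → V)
    (hin : ∀ i, i < n → G.dist v (c i) < r)
    (hsep : ∀ i j, i < j → j < n → 3 ≤ G.dist (c i) (c j)) :
    n * (G.minDegree + 1) ≤ (G.nbhdBall r v).ncard := by
  classical
  have hsep' : ∀ i j, i < n → j < n → i ≠ j → 3 ≤ G.dist (c i) (c j) := by
    intro i j hi hj hne
    rcases lt_or_gt_of_ne hne with h | h
    · exact hsep i j h hj
    · rw [SimpleGraph.dist_comm]; exact hsep j i h hi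
  set t : ℕ → Finset V := fun i => insert (c i) (G.neighborFinset (c i)) with ht
  have hdist_le_one : ∀ i a, a ∈ t i → G.dist (c i) a ≤ 1 := by
    intro i a ha
    rcases Finset.mem_insert.mp ha with h | h
    · subst h; simp [SimpleGraph.dist_self]
    · exact le_of_eq (dist_adj G ((SimpleGraph.mem_neighborFinset G (c i) a).mp h))
  have hdisj : ∀ i ∈ range n, ∀ j ∈ range n, i ≠ j → Disjoint (t i) (t j) := by
    intro i hi j hj hne
    rw [Finset.disjoint_left]
    intro a hai haj
    have h1 : G.dist (c i) a ≤ 1 := hdist_le_one i a hai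
    have h2 : G.dist (c j) a ≤ 1 := hdist_le_one j a haj
    have h3 : G.dist (c i) (c j) ≤ G.dist (c i) a + G.dist a (c j) := hG.dist_triangle
    rw [SimpleGraph.dist_comm (u := a) (v := c j)] at h3
    have h4 := hsep' i j (Finset.mem_range.mp hi) (Finset.mem_range.mp hj) hne
    omega
  set U : Finset V := (range n).biUnion t with hU
  have hcard : U.card = ∑ i ∈ range n, (t i).card := Finset.card_biUnion hdisj
  have heach : ∀ i ∈ range n, G.minDegree + 1 ≤ (t i).card := by
    intro i _
    have hnot : c i ∉ G.neighborFinset (c i) := by simp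
    rw [ht]
    simp only [Finset.card_insert_of_notMem hnot, SimpleGraph.card_neighborFinset_eq_degree]
    have := G.minDegree_le_degree (c i)
    omega
  have hlb : n * (G.minDegree + 1) ≤ U.card := by
    rw [hcard]
    calc n * (G.minDegree + 1) = ∑ _i ∈ range n, (G.minDegree + 1) := by
          rw [Finset.sum_const, Finset.card_range, smul_eq_mul]
      _ ≤ ∑ i ∈ range n, (t i).card := Finset.sum_le_sum heach
  have hsub : (U : Set V) ⊆ G.nbhdBall r v := by
    intro a ha
    obtain ⟨i, hi, hai⟩ := Finset.mem_biUnion.mp (Finset.mem_coe.mp ha)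
    have h1 : G.dist (c i) a ≤ 1 := hdist_le_one i a hai
    have h2 : G.dist v a ≤ G.dist v (c i) + G.dist (c i) a := hG.dist_triangle
    have h3 := hin i (Finset.mem_range.mp hi)
    show G.dist v a ≤ r
    omega
  calc n * (G.minDegree + 1) ≤ U.card := hlb
    _ = (U : Set V).ncard := (Set.ncard_coe_finset U).symm
    _ ≤ (G.nbhdBall r v).ncard := Set.ncard_le_ncard hsub (Set.toFinite _)

omit [Fintype V] in
/-- distance along a walk -/
lemma dist_getVert_add (hG : G.Connected) {u w : V} (W : G.Walk u w) (i k : ℕ)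
    (h : i + k ≤ W.length) : G.dist (W.getVert i) (W.getVert (i + k)) ≤ k := by
  induction k with
  | zero => simp [SimpleGraph.dist_self]
  | succ m ih =>
    have h1 : i + m < W.length := by omega
    have hadj : G.dist (W.getVert (i + m)) (W.getVert (i + m + 1)) = 1 :=
      dist_adj G (W.adj_getVert_succ h1)
    have h2 := ih (by omega)
    have h3 : G.dist (W.getVert i) (W.getVert (i + m + 1)) ≤
        G.dist (W.getVert i) (W.getVert (i + m)) +
          G.dist (W.getVert (i + m)) (W.getVert (i + m + 1)) := hG.dist_triangle
    have h4 : i + (m + 1) = i + m + 1 := by omega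
    rw [h4]
    omega

omit [Fintype V] in
/-- Geodesic ray points. -/
lemma exists_geodesic (hG : G.Connected) (u w : V) :
    ∃ p : ℕ → V, p 0 = u ∧ (∀ t, G.dist u w ≤ t → p t = w) ∧
      ∀ i j, i ≤ j → j ≤ G.dist u w → G.dist (p i) (p j) = j - i := by
  obtain ⟨W, hW⟩ := hG.exists_walk_length_eq_dist u w
  refine ⟨fun t => W.getVert t, W.getVert_zero, ?_, ?_⟩
  · intro t ht
    exact W.getVert_of_length_le (by omega)
  · intro i j hij hj
    show G.dist (W.getVert i) (W.getVert j) = j - i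
    have h1 : G.dist u (W.getVert i) ≤ i := by
      have := dist_getVert_add G hG W 0 i (by omega)
      simpa using this
    have h2 : G.dist (W.getVert i) (W.getVert j) ≤ j - i := by
      have := dist_getVert_add G hG W i (j - i) (by omega)
      have hx : i + (j - i) = j := by omega
      rwa [hx] at this
    have h3 : G.dist (W.getVert j) w ≤ G.dist u w - j := by
      have := dist_getVert_add G hG W j (W.length - j) (by omega)
      have hx : j + (W.length - j) = W.length := by omega
      rw [hx, W.getVert_length] at this
      omega
    have t1 : G.dist u w ≤ G.dist u (W.getVert j) + G.dist (W.getVert j) w := hG.dist_triangle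
    have t2 : G.dist u (W.getVert j) ≤
        G.dist u (W.getVert i) + G.dist (W.getVert i) (W.getVert j) := hG.dist_triangle
    omega

/-- A sufficient vertex exists (position 2 on a geodesic of length `≥ r`). -/
lemma exists_sufficient (hG : G.Connected) (r : ℕ) (hr3 : r % 3 = 0) (hr : 6 ≤ r)
    (hdiam : ∃ u w : V, r ≤ G.dist u w) : ∃ s : V, G.Sufficient r s := by
  obtain ⟨u, w, huw⟩ := hdiam
  obtain ⟨p, hp0, hpw, hp⟩ := exists_geodesic G hG u w
  refine ⟨p 2, ?_⟩
  show (r / 3 + 1) * (G.minDegree + 1) ≤ (G.nbhdBall r (p 2)).ncard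
  refine pack G hG r (p 2) (r / 3 + 1) (fun i => p (3 * i)) ?_ ?_
  · intro i hi
    show G.dist (p 2) (p (3 * i)) < r
    rcases Nat.lt_or_ge (3 * i) 2 with h | h
    · have hi0 : i = 0 := by omega
      subst hi0
      have := hp 0 2 (by omega) (by omega)
      rw [SimpleGraph.dist_comm]
      simp only [Nat.mul_zero]
      omega
    · have := hp 2 (3 * i) h (by omega)
      omega
  · intro i j hij hj
    show 3 ≤ G.dist (p (3 * i)) (p (3 * j))
    have := hp (3 * i) (3 * j) (by omega) (by omega)
    omega

/-- An insufficient vertex emits a geodesic ray of length `r+1`. -/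
lemma exists_far (hG : G.Connected) (r : ℕ) (hsuf : ∃ s : V, G.Sufficient r s)
    {v : V} (hv : ¬ G.Sufficient r v) :
    ∃ p : ℕ → V, p 0 = v ∧ ∀ i j, i ≤ j → j ≤ r + 1 → G.dist (p i) (p j) = j - i := by
  obtain ⟨s, hs⟩ := hsuf
  have hz : ∃ z, r < G.dist v z := by
    by_contra h
    push_neg at h
    apply hv
    show (r / 3 + 1) * (G.minDegree + 1) ≤ (G.nbhdBall r v).ncard
    have huniv : G.nbhdBall r v = Set.univ := Set.eq_univ_iff_forall.mpr (fun u => h u)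
    calc (r / 3 + 1) * (G.minDegree + 1) ≤ (G.nbhdBall r s).ncard := hs
      _ ≤ (G.nbhdBall r v).ncard := by
          rw [huniv]
          exact Set.ncard_le_ncard (Set.subset_univ _) (Set.toFinite _)
  obtain ⟨z, hz⟩ := hz
  obtain ⟨p, hp0, _, hp⟩ := exists_geodesic G hG v z
  exact ⟨p, hp0, fun i j hij hj => hp i j hij (by omega)⟩

/-- Sphere lemma: two vertices at equal distance `ρ ∈ [3, r-1]` from an insufficient
vertex are within distance 2 of each other. -/
lemma sphere_small (hG : G.Connected) (r : ℕ) (hr3 : r % 3 = 0) (hr : 6 ≤ r)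
    (hsuf : ∃ s : V, G.Sufficient r s) {v a b : V} (hv : ¬ G.Sufficient r v)
    {ρ : ℕ} (h3ρ : 3 ≤ ρ) (hρr : ρ + 1 ≤ r)
    (ha : G.dist v a = ρ) (hb : G.dist v b = ρ) : G.dist a b ≤ 2 := by
  by_contra hab
  push_neg at hab
  obtain ⟨p, hp0, hp⟩ := exists_far G hG r hsuf hv
  have hvp : ∀ t, t ≤ r + 1 → G.dist v (p t) = t := by
    intro t ht
    have := hp 0 t (by omega) ht
    rw [hp0] at this
    simpa using this
  set Dn := ρ / 3 with hDn
  set Up := (r - 1 - ρ) / 3 with hUp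
  set pos : ℕ → ℕ := fun i => if i < Dn then ρ - 3 - 3 * i else ρ + 3 + 3 * (i - Dn) with hpos
  have pos_spec : ∀ i, i < Dn + Up → pos i + 1 ≤ r ∧ (pos i + 3 ≤ ρ ∨ ρ + 3 ≤ pos i) := by
    intro i hi
    simp only [hpos]
    split_ifs with h <;> omega
  have pos_sep : ∀ i j, i < j → j < Dn + Up → pos i + 3 ≤ pos j ∨ pos j + 3 ≤ pos i := by
    intro i j hij hj
    simp only [hpos]
    split_ifs with h1 h2 h2 <;> omega
  have haway : ∀ t, t ≤ r + 1 → (t + 3 ≤ ρ ∨ ρ + 3 ≤ t) → ∀ e : V, G.dist v e = ρ →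
      3 ≤ G.dist (p t) e := by
    intro t ht hfar e he
    have l1 : G.dist v (p t) ≤ G.dist v e + G.dist e (p t) := hG.dist_triangle
    have l2 : G.dist v e ≤ G.dist v (p t) + G.dist (p t) e := hG.dist_triangle
    have lc : G.dist e (p t) = G.dist (p t) e := SimpleGraph.dist_comm
    have hv' := hvp t ht
    omega
  set c : ℕ → V := fun i => if i < Dn + Up then p (pos i) else if i = Dn + Up then a else b
    with hc
  have hpk := pack G hG r v (Dn + Up + 2) c ?_ ?_
  · apply hv
    show (r / 3 + 1) * (G.minDegree + 1) ≤ (G.nbhdBall r v).ncard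
    have hn : Dn + Up + 2 = r / 3 + 1 := by omega
    rwa [hn] at hpk
  · intro i hi
    by_cases h1 : i < Dn + Up
    · have hs := pos_spec i h1
      have hd := hvp (pos i) (by omega)
      simp only [hc]
      rw [if_pos h1]
      omega
    · by_cases h2 : i = Dn + Up
      · simp only [hc]
        rw [if_neg h1, if_pos h2]
        omega
      · simp only [hc]
        rw [if_neg h1, if_neg h2]
        omega
  · intro i j hij hj
    by_cases hjp : j < Dn + Up
    · have hip : i < Dn + Up := by omega
      simp only [hc]
      rw [if_pos hip, if_pos hjp]
      have hi' := pos_spec i hip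
      have hj' := pos_spec j hjp
      rcases pos_sep i j hij hjp with h | h
      · have := hp (pos i) (pos j) (by omega) (by omega)
        omega
      · have := hp (pos j) (pos i) (by omega) (by omega)
        rw [SimpleGraph.dist_comm]
        omega
    · by_cases hja : j = Dn + Up
      · have hip : i < Dn + Up := by omega
        simp only [hc]
        rw [if_pos hip, if_neg hjp, if_pos hja]
        have hi' := pos_spec i hip
        exact haway (pos i) (by omega) (by omega) a ha
      · by_cases hip : i < Dn + Up
        · simp only [hc]
          rw [if_pos hip, if_neg hjp, if_neg hja]
          have hi' := pos_spec i hip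
          exact haway (pos i) (by omega) (by omega) b hb
        · have hia : i = Dn + Up := by omega
          simp only [hc]
          rw [if_neg hip, if_pos hia, if_neg hjp, if_neg hja]
          omega


/-- Two insufficient vertices cannot be at distance in `[3, r]`. -/
lemma L1 (hG : G.Connected) (r : ℕ) (hr3 : r % 3 = 0) (hr : 6 ≤ r)
    (hsuf : ∃ s : V, G.Sufficient r s) (x y : V)
    (hx : ¬ G.Sufficient r x) (hy : ¬ G.Sufficient r y)
    (h2 : 2 < G.dist x y) (hler : G.dist x y ≤ r) : False := by
  obtain ⟨p, hp0, hp⟩ := exists_far G hG r hsuf hx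
  have hvp : ∀ t, t ≤ r + 1 → G.dist x (p t) = t := by
    intro t ht
    have := hp 0 t (by omega) ht
    rw [hp0] at this
    simpa using this
  rcases Nat.lt_or_ge (G.dist x y) r with hDlt | hDge
  · -- 3 ≤ D ≤ r-1
    have hsph : G.dist y (p (G.dist x y)) ≤ 2 :=
      sphere_small G hG r hr3 hr hsuf hx (ρ := G.dist x y) (by omega) (by omega) rfl
        (hvp (G.dist x y) (by omega))
    apply hy
    show (r / 3 + 1) * (G.minDegree + 1) ≤ (G.nbhdBall r y).ncard
    refine pack G hG r y (r / 3 + 1) (fun i => if i < r / 3 then p (3 * i + 3) else x) ?_ ?_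
    · intro i hi
      by_cases h : i < r / 3
      · show G.dist y (if i < r / 3 then p (3 * i + 3) else x) < r
        rw [if_pos h]
        have t1 : G.dist y (p (3 * i + 3)) ≤
            G.dist y (p (G.dist x y)) + G.dist (p (G.dist x y)) (p (3 * i + 3)) :=
          hG.dist_triangle
        rcases le_total (G.dist x y) (3 * i + 3) with h' | h'
        · have := hp (G.dist x y) (3 * i + 3) h' (by omega)
          omega
        · have := hp (3 * i + 3) (G.dist x y) h' (by omega)
          have hcm : G.dist (p (G.dist x y)) (p (3 * i + 3)) =
              G.dist (p (3 * i + 3)) (p (G.dist x y)) := SimpleGraph.dist_comm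
          omega
      · show G.dist y (if i < r / 3 then p (3 * i + 3) else x) < r
        rw [if_neg h]
        have : G.dist y x = G.dist x y := SimpleGraph.dist_comm
        omega
    · intro i j hij hj
      show 3 ≤ G.dist (if i < r / 3 then p (3 * i + 3) else x)
          (if j < r / 3 then p (3 * j + 3) else x)
      by_cases h : j < r / 3
      · rw [if_pos h, if_pos (by omega : i < r / 3)]
        have := hp (3 * i + 3) (3 * j + 3) (by omega) (by omega)
        omega
      · rw [if_neg h, if_pos (by omega : i < r / 3)]
        have h1 := hvp (3 * i + 3) (by omega)
        have hcm : G.dist (p (3 * i + 3)) x = G.dist x (p (3 * i + 3)) :=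
          SimpleGraph.dist_comm
        omega
  · -- D = r
    have hDr : G.dist x y = r := by omega
    obtain ⟨q, hq0, hqw, hq⟩ := exists_geodesic G hG x y
    have hvq : ∀ t, t ≤ r → G.dist x (q t) = t := by
      intro t ht
      have := hq 0 t (by omega) (by omega)
      rw [hq0] at this
      simpa using this
    have hqy : q (G.dist x y) = y := hqw _ le_rfl
    have hq1y : G.dist (q 1) y = r - 1 := by
      have := hq 1 (G.dist x y) (by omega) le_rfl
      rw [hqy] at this
      omega
    have hqr1y : G.dist (q (r - 1)) y = 1 := by
      have := hq (r - 1) (G.dist x y) (by omega) le_rfl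
      rw [hqy] at this
      omega
    have hsph : G.dist (p (r - 1)) (q (r - 1)) ≤ 2 :=
      sphere_small G hG r hr3 hr hsuf hx (ρ := r - 1) (by omega) (by omega)
        (hvp (r - 1) (by omega)) (by rw [hvq (r - 1) (by omega)])
    apply hy
    show (r / 3 + 1) * (G.minDegree + 1) ≤ (G.nbhdBall r y).ncard
    refine pack G hG r y (r / 3 + 1) (fun i => if i < r / 3 then p (3 * i + 4) else q 1) ?_ ?_
    · intro i hi
      by_cases h : i < r / 3
      · show G.dist y (if i < r / 3 then p (3 * i + 4) else q 1) < r
        rw [if_pos h]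
        have t1 : G.dist y (p (3 * i + 4)) ≤
            G.dist y (p (r - 1)) + G.dist (p (r - 1)) (p (3 * i + 4)) := hG.dist_triangle
        have t2 : G.dist y (p (r - 1)) ≤
            G.dist y (q (r - 1)) + G.dist (q (r - 1)) (p (r - 1)) := hG.dist_triangle
        have c1 : G.dist y (q (r - 1)) = G.dist (q (r - 1)) y := SimpleGraph.dist_comm
        have c2 : G.dist (q (r - 1)) (p (r - 1)) = G.dist (p (r - 1)) (q (r - 1)) :=
          SimpleGraph.dist_comm
        rcases le_total (r - 1) (3 * i + 4) with h' | h'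
        · have := hp (r - 1) (3 * i + 4) h' (by omega)
          omega
        · have := hp (3 * i + 4) (r - 1) h' (by omega)
          have c3 : G.dist (p (r - 1)) (p (3 * i + 4)) =
              G.dist (p (3 * i + 4)) (p (r - 1)) := SimpleGraph.dist_comm
          omega
      · show G.dist y (if i < r / 3 then p (3 * i + 4) else q 1) < r
        rw [if_neg h]
        have : G.dist y (q 1) = G.dist (q 1) y := SimpleGraph.dist_comm
        omega
    · intro i j hij hj
      show 3 ≤ G.dist (if i < r / 3 then p (3 * i + 4) else q 1)
          (if j < r / 3 then p (3 * j + 4) else q 1)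
      by_cases h : j < r / 3
      · rw [if_pos h, if_pos (by omega : i < r / 3)]
        have := hp (3 * i + 4) (3 * j + 4) (by omega) (by omega)
        omega
      · rw [if_neg h, if_pos (by omega : i < r / 3)]
        have t1 : G.dist x (p (3 * i + 4)) ≤
            G.dist x (q 1) + G.dist (q 1) (p (3 * i + 4)) := hG.dist_triangle
        have h1 := hvp (3 * i + 4) (by omega)
        have h2 := hvq 1 (by omega)
        have hcm : G.dist (p (3 * i + 4)) (q 1) = G.dist (q 1) (p (3 * i + 4)) :=
          SimpleGraph.dist_comm
        omega

/-- If `x, y` are insufficient at distance `r+1`, no vertex is at distance `≥ r` from both. -/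
lemma claimC (hG : G.Connected) (r : ℕ) (hr3 : r % 3 = 0) (hr : 6 ≤ r)
    (hsuf : ∃ s : V, G.Sufficient r s) (x y z : V)
    (hx : ¬ G.Sufficient r x) (hy : ¬ G.Sufficient r y)
    (hxy : G.dist x y = r + 1) (hxz : r ≤ G.dist x z) (hyz : r ≤ G.dist y z) : False := by
  obtain ⟨P, hP0, hPw, hP⟩ := exists_geodesic G hG x y
  obtain ⟨px, hpx0, hpxw, hpx⟩ := exists_geodesic G hG x z
  obtain ⟨py, hpy0, hpyw, hpy⟩ := exists_geodesic G hG y z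
  have hPend : P (r + 1) = y := by
    apply hPw
    omega
  have hPr1 : G.dist x (P (r - 1)) = r - 1 := by
    have := hP 0 (r - 1) (by omega) (by omega)
    rw [hP0] at this
    simpa using this
  have hPr1y : G.dist (P (r - 1)) y = 2 := by
    have := hP (r - 1) (r + 1) (by omega) (by omega)
    rw [hPend] at this
    omega
  have hP2 : G.dist x (P 2) = 2 := by
    have := hP 0 2 (by omega) (by omega)
    rw [hP0] at this
    simpa using this
  have hP2y : G.dist (P 2) y = r - 1 := by
    have := hP 2 (r + 1) (by omega) (by omega)
    rw [hPend] at this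
    omega
  have hpxr1 : G.dist x (px (r - 1)) = r - 1 := by
    have := hpx 0 (r - 1) (by omega) (by omega)
    rw [hpx0] at this
    simpa using this
  have hpxz : G.dist (px (r - 1)) z = G.dist x z - (r - 1) := by
    have := hpx (r - 1) (G.dist x z) (by omega) le_rfl
    rw [hpxw (G.dist x z) le_rfl] at this
    exact this
  have hpyr1 : G.dist y (py (r - 1)) = r - 1 := by
    have := hpy 0 (r - 1) (by omega) (by omega)
    rw [hpy0] at this
    simpa using this
  have hpyz : G.dist (py (r - 1)) z = G.dist y z - (r - 1) := by
    have := hpy (r - 1) (G.dist y z) (by omega) le_rfl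
    rw [hpyw (G.dist y z) le_rfl] at this
    exact this
  have s1 : G.dist (px (r - 1)) (P (r - 1)) ≤ 2 :=
    sphere_small G hG r hr3 hr hsuf hx (ρ := r - 1) (by omega) (by omega) hpxr1 hPr1
  have s2 : G.dist (py (r - 1)) (P 2) ≤ 2 := by
    refine sphere_small G hG r hr3 hr hsuf hy (ρ := r - 1) (by omega) (by omega) hpyr1 ?_
    rw [SimpleGraph.dist_comm]
    exact hP2y
  -- chain 1 : d(y,z) ≤ d(y, P(r-1)) + d(P(r-1), px(r-1)) + d(px(r-1), z)
  have t1 : G.dist y z ≤ G.dist y (P (r - 1)) + G.dist (P (r - 1)) z := hG.dist_triangle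
  have t1' : G.dist (P (r - 1)) z ≤
      G.dist (P (r - 1)) (px (r - 1)) + G.dist (px (r - 1)) z := hG.dist_triangle
  have c1 : G.dist y (P (r - 1)) = G.dist (P (r - 1)) y := SimpleGraph.dist_comm
  have c2 : G.dist (P (r - 1)) (px (r - 1)) = G.dist (px (r - 1)) (P (r - 1)) :=
    SimpleGraph.dist_comm
  -- chain 2 : d(x,z) ≤ d(x, P 2) + d(P 2, py(r-1)) + d(py(r-1), z)
  have t2 : G.dist x z ≤ G.dist x (P 2) + G.dist (P 2) z := hG.dist_triangle
  have t2' : G.dist (P 2) z ≤ G.dist (P 2) (py (r - 1)) + G.dist (py (r - 1)) z :=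
    hG.dist_triangle
  have c3 : G.dist (P 2) (py (r - 1)) = G.dist (py (r - 1)) (P 2) := SimpleGraph.dist_comm
  omega

end EdgeGrowthAux

/-- insufficient vertices lying in distinct equivalence classes of the
relation `d ≤ 2` are at distance at least `r + 1`, and at most one pair of classes is
at distance exactly `r + 1`: if `x, y` and `x', y'` are two pairs of insufficient
vertices in distinct classes realising distance `r + 1`, then the pairs of classes
coincide, i.e. `x ∼ x'` and `y ∼ y'`, or `x ∼ y'` and `y ∼ x'`. -/
theorem edge_growth_classes_far_apart {V : Type*} [Fintype V]
    (G : SimpleGraph V) [DecidableRel G.Adj] (hG : G.Connected)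
    (r : ℕ) (hr3 : r % 3 = 0) (hr : 6 ≤ r)
    (hdiam : ∃ u w : V, r ≤ G.dist u w)
    (hl : ∃ x y : V, ¬ G.Sufficient r x ∧ ¬ G.Sufficient r y ∧ 2 < G.dist x y) :
    (∀ x y : V, ¬ G.Sufficient r x → ¬ G.Sufficient r y → 2 < G.dist x y →
        r + 1 ≤ G.dist x y) ∧
      (∀ x y x' y' : V, ¬ G.Sufficient r x → ¬ G.Sufficient r y →
        ¬ G.Sufficient r x' → ¬ G.Sufficient r y' →
        2 < G.dist x y → 2 < G.dist x' y' →
        G.dist x y = r + 1 → G.dist x' y' = r + 1 →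
        (G.dist x x' ≤ 2 ∧ G.dist y y' ≤ 2) ∨ (G.dist x y' ≤ 2 ∧ G.dist y x' ≤ 2)) := by
  have hsuf : ∃ s : V, G.Sufficient r s :=
    EdgeGrowthAux.exists_sufficient G hG r hr3 hr hdiam
  have part1 : ∀ x y : V, ¬ G.Sufficient r x → ¬ G.Sufficient r y → 2 < G.dist x y →
      r + 1 ≤ G.dist x y := by
    intro x y hx hy h2
    by_contra h
    push_neg at h
    exact EdgeGrowthAux.L1 G hG r hr3 hr hsuf x y hx hy h2 (by omega)
  refine ⟨part1, ?_⟩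
  intro x y x' y' hx hy hx' hy' h2 h2' hxy hx'y'
  have near : ∀ w : V, ¬ G.Sufficient r w → G.dist x w ≤ 2 ∨ G.dist y w ≤ 2 := by
    intro w hw
    by_cases hc : r ≤ G.dist x w
    · right
      have hyw : ¬ r ≤ G.dist y w := fun h =>
        EdgeGrowthAux.claimC G hG r hr3 hr hsuf x y w hx hy hxy hc h
      have := part1 y w hy hw
      by_contra hcon
      push_neg at hcon
      have := this hcon
      omega
    · have := part1 x w hx hw
      left
      by_contra hcon
      push_neg at hcon
      have := this hcon
      omega
  have hxx' := near x' hx'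
  have hyy' := near y' hy'
  have htri : ∀ a b c : V, G.dist a c ≤ G.dist a b + G.dist b c := fun a b c => hG.dist_triangle
  have hcomm : ∀ a b : V, G.dist a b = G.dist b a := fun a b => SimpleGraph.dist_comm
  rcases hxx' with h1 | h1 <;> rcases hyy' with h2'' | h2''
  · -- x' near x, y' near x : contradiction with d(x',y') = r+1
    exfalso
    have t := htri x' x y'
    have := hcomm x x'
    omega
  · exact Or.inl ⟨h1, h2''⟩
  · exact Or.inr ⟨h2'', h1⟩
  · exfalso
    have t := htri x' y y'
    have := hcomm y x'
    omega
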